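/- For any rate R and relative distance δ ∈ (0,1/2) with R ≤ 1 - H₂(δ) - 1/m (strictly, with R < 1 - H₂(δ)), for sufficiently large m there exists a binary linear code of length m, dimension ⌈Rm⌉, and minimum relative distance greater than δ (Gilbert–Varshamov bound). -/

import Mathlib

/-- The binary entropy function `H₂(δ) = -δ log₂ δ - (1-δ) log₂ (1-δ)`. -/
noncomputable def binEnt (δ : ℝ) : ℝ :=
  -δ * Real.logb 2 δ - (1 - δ) * Real.logb 2 (1 - δ)

open Finset Real

private lemma zmod2_eq_of_ne_zero_iff (a b : ZMod 2) (h : a ≠ 0 ↔ b ≠ 0) : a = b := by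
  revert h; revert a b; decide

private lemma ball_card_le (m d : ℕ) :
    (univ.filter (fun y : Fin m → ZMod 2 => hammingNorm y ≤ d)).card
      ≤ ∑ i ∈ range (d + 1), m.choose i := by
  classical
  rw [Finset.card_eq_sum_card_fiberwise
    (f := fun y : Fin m → ZMod 2 => hammingNorm y)
    (t := range (d+1)) (fun y hy => by simp_all [Nat.lt_succ_iff, mem_filter] )]
  apply Finset.sum_le_sum
  intro i _
  calc ((univ.filter (fun y : Fin m → ZMod 2 => hammingNorm y ≤ d)).filter
      (fun y => hammingNorm y = i)).card
      ≤ (Finset.powersetCard i (univ : Finset (Fin m))).card := by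
        apply Finset.card_le_card_of_injOn (fun y => univ.filter (fun j => y j ≠ 0))
        · intro y hy
          simp only [mem_coe, mem_filter] at hy
          rw [mem_coe, Finset.mem_powersetCard]
          exact ⟨Finset.subset_univ _, hy.2⟩
        · intro y _ z _ hyz
          funext j
          have h : (j ∈ univ.filter (fun j => y j ≠ 0)) ↔ (j ∈ univ.filter (fun j => z j ≠ 0)) := by
            simp only at hyz; rw [hyz]
          simp only [mem_filter, mem_univ, true_and] at h
          exact zmod2_eq_of_ne_zero_iff _ _ h
    _ = m.choose i := by simp [Finset.card_powersetCard]

private lemma key_eq (δ : ℝ) (h0 : 0 < δ) (h1 : δ < 1) (m : ℕ) :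
    (1 - δ)^m * (δ/(1-δ)) ^ (δ * m) = 2 ^ (-(binEnt δ * m)) := by
  have h2 : (0:ℝ) < 1 - δ := by linarith
  have ht : (0:ℝ) < δ/(1-δ) := div_pos h0 h2
  have hL : (0:ℝ) < (1 - δ)^m * (δ/(1-δ)) ^ (δ * m) :=
    mul_pos (pow_pos h2 m) (rpow_pos_of_pos ht _)
  have hR : (0:ℝ) < (2:ℝ) ^ (-(binEnt δ * m)) := rpow_pos_of_pos two_pos _
  have := Real.log_injOn_pos (Set.mem_Ioi.mpr hL) (Set.mem_Ioi.mpr hR)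
  apply this
  rw [Real.log_mul (by positivity) (by positivity), Real.log_pow, Real.log_rpow ht,
    Real.log_rpow two_pos, Real.log_div (ne_of_gt h0) (ne_of_gt h2)]
  have hlog2 : Real.log 2 ≠ 0 := by positivity
  simp only [binEnt, Real.logb, div_eq_mul_inv]
  field_simp
  ring

private lemma sum_choose_le_rpow (δ : ℝ) (h0 : 0 < δ) (h1 : δ ≤ 1/2) (m : ℕ) :
    (∑ i ∈ range (⌊δ * m⌋₊ + 1), (m.choose i : ℝ)) ≤ (2:ℝ) ^ (binEnt δ * m) := by
  have h1' : δ < 1 := by linarith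
  have h2 : (0:ℝ) < 1 - δ := by linarith
  have ht0 : (0:ℝ) < δ/(1-δ) := div_pos h0 h2
  have ht1 : δ/(1-δ) ≤ 1 := by
    rw [div_le_one h2]; linarith
  set d := ⌊δ * m⌋₊ with hd
  have hdm : d ≤ m := by
    have : δ * m ≤ m := by nlinarith [Nat.cast_nonneg (α := ℝ) m]
    calc d ≤ ⌊(m:ℝ)⌋₊ := Nat.floor_le_floor this
    _ = m := Nat.floor_natCast m
  set A : ℝ := (1 - δ)^m * (δ/(1-δ)) ^ (δ * m) with hA
  have hApos : 0 < A := mul_pos (pow_pos h2 m) (Real.rpow_pos_of_pos ht0 _)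
  have hterm : ∀ i ∈ range (d+1), (m.choose i : ℝ) * A ≤ δ^i * (1-δ)^(m-i) * m.choose i := by
    intro i hi
    rw [mem_range, Nat.lt_succ_iff] at hi
    have him : i ≤ m := le_trans hi hdm
    have hiR : (i:ℝ) ≤ δ * m := le_trans (Nat.cast_le.mpr hi) (Nat.floor_le (by positivity))
    have h3 : (δ/(1-δ)) ^ (δ * m) ≤ (δ/(1-δ)) ^ (i:ℝ) :=
      Real.rpow_le_rpow_of_exponent_ge ht0 ht1 hiR
    have h4 : δ^i * (1-δ)^(m-i) = (1-δ)^m * (δ/(1-δ))^i := by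
      rw [div_pow, pow_sub₀ _ (ne_of_gt h2) him]
      field_simp
    rw [h4, ← Real.rpow_natCast (δ/(1-δ)) i]
    calc (m.choose i : ℝ) * A ≤ (m.choose i : ℝ) * ((1-δ)^m * (δ/(1-δ)) ^ (i:ℝ)) :=
          mul_le_mul_of_nonneg_left
            (mul_le_mul_of_nonneg_left h3 (le_of_lt (pow_pos h2 m))) (Nat.cast_nonneg _)
      _ = (1-δ)^m * (δ/(1-δ)) ^ (i:ℝ) * m.choose i := by ring
  have hsum1 : ∑ i ∈ range (m+1), δ^i * (1-δ)^(m-i) * m.choose i = 1 := by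
    have h6 := add_pow δ (1-δ) m
    have h5 : δ + (1-δ) = 1 := by ring
    rw [h5, one_pow] at h6
    rw [← h6]
  have hsub : ∑ i ∈ range (d+1), δ^i * (1-δ)^(m-i) * m.choose i ≤ 1 := by
    calc ∑ i ∈ range (d+1), δ^i * (1-δ)^(m-i) * m.choose i
        ≤ ∑ i ∈ range (m+1), δ^i * (1-δ)^(m-i) * m.choose i := by
          apply Finset.sum_le_sum_of_subset_of_nonneg
          · exact Finset.range_subset_range.mpr (by omega)
          · intro i _ _; positivity
      _ = 1 := hsum1
  have : (∑ i ∈ range (d+1), (m.choose i : ℝ)) * A ≤ 1 := by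
    rw [Finset.sum_mul]
    exact le_trans (Finset.sum_le_sum hterm) hsub
  have hfinal : (∑ i ∈ range (d+1), (m.choose i : ℝ)) ≤ A⁻¹ := by
    rw [inv_eq_one_div, le_div_iff₀ hApos]
    simpa using this
  calc (∑ i ∈ range (d+1), (m.choose i : ℝ)) ≤ A⁻¹ := hfinal
    _ = (2:ℝ) ^ (binEnt δ * m) := by
        rw [hA, key_eq δ h0 h1' m, ← Real.rpow_neg (by norm_num), neg_neg]

private lemma extend_code (m d : ℕ) (C : Submodule (ZMod 2) (Fin m → ZMod 2))
    (hC : ∀ c ∈ C, c ≠ 0 → d < hammingNorm c)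
    (hcard : Nat.card C * (univ.filter (fun y : Fin m → ZMod 2 => hammingNorm y ≤ d)).card
      < 2 ^ m) :
    ∃ C' : Submodule (ZMod 2) (Fin m → ZMod 2),
      Module.finrank (ZMod 2) C' = Module.finrank (ZMod 2) C + 1 ∧
      ∀ c ∈ C', c ≠ 0 → d < hammingNorm c := by
  classical
  set B : Finset (Fin m → ZMod 2) :=
    univ.filter (fun x => ∃ c ∈ C, hammingNorm (x - c) ≤ d) with hB
  have hBcard : B.card ≤ Nat.card C *
      (univ.filter (fun y : Fin m → ZMod 2 => hammingNorm y ≤ d)).card := by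
    have hsub : B ⊆ (univ.filter (· ∈ C)).biUnion
        (fun c => univ.filter (fun x => hammingNorm (x - c) ≤ d)) := by
      intro x hx
      simp only [hB, mem_filter, mem_univ, true_and] at hx
      obtain ⟨c, hc, hcd⟩ := hx
      simp only [mem_biUnion, mem_filter, mem_univ, true_and]
      exact ⟨c, hc, hcd⟩
    calc B.card ≤ _ := Finset.card_le_card hsub
      _ ≤ ∑ c ∈ univ.filter (· ∈ C),
            (univ.filter (fun x => hammingNorm (x - c) ≤ d)).card :=
          Finset.card_biUnion_le
      _ = ∑ c ∈ univ.filter (· ∈ C),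
            (univ.filter (fun y : Fin m → ZMod 2 => hammingNorm y ≤ d)).card := by
          apply Finset.sum_congr rfl
          intro c _
          apply Finset.card_bij (fun x _ => x - c)
          · intro x hx
            simp only [mem_filter, mem_univ, true_and] at *
            exact hx
          · intro x hx y hy hxy
            simpa using congrArg (· + c) hxy
          · intro y hy
            simp only [mem_filter, mem_univ, true_and] at *
            exact ⟨y + c, by simpa using hy, by simp⟩
      _ = _ := by
          rw [Finset.sum_const, smul_eq_mul, ← Fintype.card_subtype, Nat.card_eq_fintype_card]
  have hBlt : B.card < Fintype.card (Fin m → ZMod 2) := by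
    have : Fintype.card (Fin m → ZMod 2) = 2 ^ m := by simp
    omega
  obtain ⟨x, hx⟩ : ∃ x, x ∉ B := by
    by_contra h
    push_neg at h
    have heq : B = univ := Finset.eq_univ_iff_forall.mpr h
    rw [heq, Finset.card_univ] at hBlt
    omega
  have hxB : ∀ c ∈ C, d < hammingNorm (x - c) := by
    intro c hc
    by_contra h
    exact hx (by simp only [hB, mem_filter, mem_univ, true_and]; exact ⟨c, hc, by omega⟩)
  have hxC : x ∉ C := fun h => absurd (hxB x h) (by simp)
  have hx0 : x ≠ 0 := fun h => hxC (h ▸ C.zero_mem)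
  refine ⟨C ⊔ Submodule.span (ZMod 2) {x}, ?_, ?_⟩
  · have hinf : C ⊓ Submodule.span (ZMod 2) {x} = ⊥ := by
      rw [eq_bot_iff]
      intro y hy
      rw [Submodule.mem_inf] at hy
      obtain ⟨hyC, hyx⟩ := hy
      rw [Submodule.mem_span_singleton] at hyx
      obtain ⟨a, rfl⟩ := hyx
      obtain ha | ha := (by decide : ∀ a : ZMod 2, a = 0 ∨ a = 1) a <;> subst ha
      · simp
      · exfalso; apply hxC; simpa using hyC
    have := Submodule.finrank_sup_add_finrank_inf_eq C (Submodule.span (ZMod 2) {x})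
    rw [hinf] at this
    simp only [finrank_bot, add_zero] at this
    rw [this, finrank_span_singleton hx0]
  · intro y hy hy0
    rw [Submodule.mem_sup] at hy
    obtain ⟨c, hc, z, hz, rfl⟩ := hy
    rw [Submodule.mem_span_singleton] at hz
    obtain ⟨a, rfl⟩ := hz
    obtain ha | ha := (by decide : ∀ a : ZMod 2, a = 0 ∨ a = 1) a <;> subst ha
    · simp only [zero_smul, add_zero] at *
      exact hC c hc hy0
    · rw [one_smul] at *
      have hneg : -c ∈ C := C.neg_mem hc
      have := hxB (-c) hneg
      have heq : x - -c = c + x := by ring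
      rwa [heq] at this

private lemma build_code (m d k : ℕ)
    (hk : 2 ^ k * (univ.filter (fun y : Fin m → ZMod 2 => hammingNorm y ≤ d)).card ≤ 2 ^ m) :
    ∃ C : Submodule (ZMod 2) (Fin m → ZMod 2),
      Module.finrank (ZMod 2) C = k ∧ ∀ c ∈ C, c ≠ 0 → d < hammingNorm c := by
  classical
  induction k with
  | zero =>
    refine ⟨⊥, by simp, ?_⟩
    intro c hc h0
    rw [Submodule.mem_bot] at hc
    exact absurd hc h0
  | succ k ih =>
    set V := (univ.filter (fun y : Fin m → ZMod 2 => hammingNorm y ≤ d)).card with hV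
    have hVpos : 0 < V := by
      apply Finset.card_pos.mpr
      exact ⟨0, by simp [hammingNorm]⟩
    have hk' : 2 ^ k * V ≤ 2 ^ m :=
      le_trans (Nat.mul_le_mul_right V (Nat.pow_le_pow_right (by norm_num) (by omega))) hk
    obtain ⟨C, hCrank, hCmin⟩ := ih hk'
    have hCcard : Nat.card C = 2 ^ k := by
      rw [Nat.card_eq_fintype_card, Module.card_eq_pow_finrank (K := ZMod 2), hCrank]
      norm_num
    have hcard : Nat.card C * V < 2 ^ m := by
      rw [hCcard]
      calc 2 ^ k * V < 2 ^ (k+1) * V :=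
            (Nat.mul_lt_mul_right hVpos).mpr (Nat.pow_lt_pow_right (by norm_num) (by omega))
        _ ≤ 2 ^ m := hk
    obtain ⟨C', h1, h2⟩ := extend_code m d C hCmin hcard
    exact ⟨C', by rw [h1, hCrank], h2⟩

/-- Gilbert–Varshamov bound: for any rate `R > 0` and relative distance
`δ ∈ (0, 1/2)` with `R < 1 - H₂(δ)`, for all sufficiently large `m` there
exists a binary linear code of length `m`, dimension `⌈R m⌉`, whose every
nonzero codeword has Hamming weight greater than `δ m`. -/
theorem gilbert_varshamov (R δ : ℝ) (hδ : δ ∈ Set.Ioo (0 : ℝ) (1 / 2))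
    (hR : 0 < R) (hRδ : R < 1 - binEnt δ) :
    ∃ M : ℕ, ∀ m : ℕ, M ≤ m →
      ∃ C : Submodule (ZMod 2) (Fin m → ZMod 2),
        Module.finrank (ZMod 2) C = ⌈R * m⌉₊ ∧
        ∀ c ∈ C, c ≠ 0 → δ * m < (hammingNorm c : ℝ) := by
  obtain ⟨hδ0, hδhalf⟩ := hδ
  set ε := 1 - R - binEnt δ with hε
  have hεpos : 0 < ε := by rw [hε]; linarith
  refine ⟨max 1 ⌈1/ε⌉₊, fun m hm => ?_⟩
  have hm1 : 1 ≤ m := le_trans (le_max_left _ _) hm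
  have hmε : 1 ≤ ε * m := by
    have h1 : (⌈1/ε⌉₊ : ℝ) ≤ m := Nat.cast_le.mpr (le_trans (le_max_right _ _) hm)
    have h2 : 1/ε ≤ (⌈1/ε⌉₊ : ℝ) := Nat.le_ceil _
    have h3 : 1/ε ≤ (m:ℝ) := le_trans h2 h1
    rw [div_le_iff₀ hεpos] at h3
    linarith
  set d := ⌊δ * m⌋₊ with hd
  set k := ⌈R * m⌉₊ with hkdef
  have hRm : (0:ℝ) ≤ R * m := by positivity
  have hk1 : (k : ℝ) ≤ R * m + 1 := le_of_lt (Nat.ceil_lt_add_one hRm)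
  -- the key cardinality bound, as reals
  have hVreal : ((univ.filter (fun y : Fin m → ZMod 2 => hammingNorm y ≤ d)).card : ℝ)
      ≤ (2:ℝ) ^ (binEnt δ * m) := by
    calc ((univ.filter (fun y : Fin m → ZMod 2 => hammingNorm y ≤ d)).card : ℝ)
        ≤ ((∑ i ∈ range (d + 1), m.choose i : ℕ) : ℝ) := Nat.cast_le.mpr (ball_card_le m d)
      _ = ∑ i ∈ range (d + 1), (m.choose i : ℝ) := by push_cast; ring
      _ ≤ (2:ℝ) ^ (binEnt δ * m) := sum_choose_le_rpow δ hδ0 (le_of_lt hδhalf) m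
  have hkey : 2 ^ k * (univ.filter (fun y : Fin m → ZMod 2 => hammingNorm y ≤ d)).card
      ≤ 2 ^ m := by
    have hreal : ((2 ^ k * (univ.filter
        (fun y : Fin m → ZMod 2 => hammingNorm y ≤ d)).card : ℕ) : ℝ) ≤ ((2 ^ m : ℕ) : ℝ) := by
      push_cast
      calc (2:ℝ) ^ k * ((univ.filter (fun y : Fin m → ZMod 2 => hammingNorm y ≤ d)).card : ℝ)
          ≤ (2:ℝ) ^ k * (2:ℝ) ^ (binEnt δ * m) := by
            apply mul_le_mul_of_nonneg_left hVreal (by positivity)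
        _ = (2:ℝ) ^ ((k:ℝ) + binEnt δ * m) := by
            rw [Real.rpow_add two_pos, Real.rpow_natCast]
        _ ≤ (2:ℝ) ^ (m:ℝ) := by
            apply Real.rpow_le_rpow_of_exponent_le one_le_two
            have hbe : 0 ≤ binEnt δ * m ∨ True := Or.inr trivial
            nlinarith [hk1, hmε]
        _ = (2:ℝ) ^ m := by rw [Real.rpow_natCast]
    exact_mod_cast hreal
  obtain ⟨C, hCrank, hCmin⟩ := build_code m d k hkey
  refine ⟨C, hCrank, fun c hc hc0 => ?_⟩
  have := hCmin c hc hc0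
  exact (Nat.floor_lt (by positivity)).mp this
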